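/- Let u : [0,∞)² → ℝ be C² with nonnegative mixed partial derivative ∂²u/∂t₁∂t₂ and u(0,t₂) = u(t₁,0) = 0 for all t₁,t₂ ≥ 0. Let c : [0,∞)² → ℝ be continuous nonnegative, and a, b : [0,∞) → ℝ positive C¹ functions with a' ≥ 0 and b' ≥ 0. If ∂²u/∂t₁∂t₂(t₁,t₂) ≤ a(t₁) + b(t₂) + ∫₀^{t₁}∫₀^{t₂} c(s₁,s₂)·(u(s₁,s₂) + ∂²u/∂s₁∂s₂(s₁,s₂)) ds₂ ds₁ for all t₁,t₂ ≥ 0, then u(t₁,t₂) ≤ ∫₀^{t₁}∫₀^{t₂} h(s₁,s₂) ds₂ ds₁, where p(t₁,t₂) = a'(t₁)/(a(t₁)+b(0)) + ∫₀^{t₂}(1+c(t₁,s₂)) ds₂, q(t₁,t₂) = (a(0)+b(t₂))·exp(∫₀^{t₁} p(s₁,t₂) ds₁)·c(t₁,t₂), and h(t₁,t₂) = a(t₁)+b(t₂) + ∫₀^{t₁}∫₀^{t₂} q(s₁,s₂) ds₂ ds₁. -/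

import Mathlib

open intervalIntegral Set MeasureTheory Filter Topology

lemma pach_cont_param {f : ℝ → ℝ → ℝ} (hf : Continuous fun z : ℝ × ℝ => f z.1 z.2) :
    Continuous fun z : ℝ × ℝ => ∫ s in (0:ℝ)..z.2, f z.1 s :=
  intervalIntegral.continuous_parametric_primitive_of_continuous (f := f) hf

lemma pach_cont_double {f : ℝ → ℝ → ℝ} (hf : Continuous fun z : ℝ × ℝ => f z.1 z.2) :
    Continuous fun z : ℝ × ℝ => ∫ s₁ in (0:ℝ)..z.1, ∫ s₂ in (0:ℝ)..z.2, f s₁ s₂ := by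
  have h1 : Continuous fun w : ℝ × ℝ => ∫ s₂ in (0:ℝ)..w.2, f w.1 s₂ := pach_cont_param hf
  have harg : Continuous (Function.uncurry fun (t₂ s₁ : ℝ) => ∫ s₂ in (0:ℝ)..t₂, f s₁ s₂) := by
    simpa [Function.uncurry_def, Function.comp_def] using h1.comp (continuous_snd.prodMk continuous_fst)
  have h2 := intervalIntegral.continuous_parametric_primitive_of_continuous (μ := volume)
    (a₀ := (0:ℝ)) harg
  have h3 := h2.comp ((continuous_snd.prodMk continuous_fst) :
    Continuous fun z : ℝ × ℝ => (z.2, z.1))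
  simpa [Function.comp_def] using h3

lemma pach_ae_ne_zero : ∀ᵐ y : ℝ ∂volume, y ≠ 0 := by
  rw [MeasureTheory.ae_iff]
  simpa using MeasureTheory.measure_singleton (0:ℝ)

lemma pach_integral_mono_pos {f g : ℝ → ℝ} {t : ℝ} (ht : 0 ≤ t)
    (hfi : IntervalIntegrable f volume 0 t) (hgi : IntervalIntegrable g volume 0 t)
    (hle : ∀ y, 0 < y → y ≤ t → f y ≤ g y) :
    (∫ s in (0:ℝ)..t, f s) ≤ ∫ s in (0:ℝ)..t, g s := by
  apply intervalIntegral.integral_mono_ae_restrict ht hfi hgi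
  filter_upwards [ae_restrict_of_ae pach_ae_ne_zero,
    ae_restrict_mem measurableSet_Icc] with y hy hmem
  exact hle y (lt_of_le_of_ne hmem.1 (Ne.symm hy)) hmem.2

lemma pach_integral_congr_pos {f g : ℝ → ℝ} {t : ℝ} (ht : 0 ≤ t)
    (heq : ∀ y, 0 < y → y ≤ t → f y = g y) :
    (∫ s in (0:ℝ)..t, f s) = ∫ s in (0:ℝ)..t, g s := by
  apply intervalIntegral.integral_congr_ae
  rw [Set.uIoc_of_le ht]
  exact MeasureTheory.ae_of_all _ fun y hy => heq y hy.1 hy.2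

lemma pach_double_congr {f g : ℝ → ℝ → ℝ} {t₁ t₂ : ℝ} (h1 : 0 ≤ t₁) (h2 : 0 ≤ t₂)
    (heq : ∀ x y, 0 < x → 0 < y → f x y = g x y) :
    (∫ s₁ in (0:ℝ)..t₁, ∫ s₂ in (0:ℝ)..t₂, f s₁ s₂) =
      ∫ s₁ in (0:ℝ)..t₁, ∫ s₂ in (0:ℝ)..t₂, g s₁ s₂ :=
  pach_integral_congr_pos h1 fun x hx _ => pach_integral_congr_pos h2 fun y hy _ => heq x y hx hy

lemma pach_double_mono {f g : ℝ → ℝ → ℝ} {t₁ t₂ : ℝ} (h1 : 0 ≤ t₁) (h2 : 0 ≤ t₂)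
    (hfc : Continuous fun z : ℝ × ℝ => f z.1 z.2) (hgc : Continuous fun z : ℝ × ℝ => g z.1 z.2)
    (hle : ∀ x y, 0 < x → 0 < y → f x y ≤ g x y) :
    (∫ s₁ in (0:ℝ)..t₁, ∫ s₂ in (0:ℝ)..t₂, f s₁ s₂) ≤
      ∫ s₁ in (0:ℝ)..t₁, ∫ s₂ in (0:ℝ)..t₂, g s₁ s₂ := by
  apply pach_integral_mono_pos h1
    ((intervalIntegral.continuous_parametric_intervalIntegral_of_continuous'
        (f := f) hfc 0 t₂).intervalIntegrable 0 t₁)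
    ((intervalIntegral.continuous_parametric_intervalIntegral_of_continuous'
        (f := g) hgc 0 t₂).intervalIntegrable 0 t₁)
  intro x hx _
  apply pach_integral_mono_pos h2
    ((hfc.comp (Continuous.prodMk continuous_const continuous_id)).intervalIntegrable 0 t₂)
    ((hgc.comp (Continuous.prodMk continuous_const continuous_id)).intervalIntegrable 0 t₂)
  exact fun y hy _ => hle x y hx hy

lemma pach_nonneg_ext {f : ℝ × ℝ → ℝ} (hf : ContinuousOn f (Ici 0 ×ˢ Ici 0))
    (h : ∀ x y : ℝ, 0 < x → 0 < y → 0 ≤ f (x, y)) :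
    ∀ x y : ℝ, 0 ≤ x → 0 ≤ y → 0 ≤ f (x, y) := by
  intro x y hx hy
  have hx' : ∀ n : ℕ, (0:ℝ) < x + 1/(n+1) :=
    fun n => add_pos_of_nonneg_of_pos hx (by positivity)
  have hy' : ∀ n : ℕ, (0:ℝ) < y + 1/(n+1) :=
    fun n => add_pos_of_nonneg_of_pos hy (by positivity)
  have hmem : ∀ n : ℕ, ((x + 1/(n+1) : ℝ), (y + 1/(n+1) : ℝ)) ∈ (Ici 0 ×ˢ Ici 0 : Set (ℝ×ℝ)) :=
    fun n => ⟨(hx' n).le, (hy' n).le⟩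
  have h0 := tendsto_one_div_add_atTop_nhds_zero_nat (𝕜 := ℝ)
  have hxs : Tendsto (fun n : ℕ => x + 1/((n:ℝ)+1)) atTop (𝓝 x) := by
    simpa using tendsto_const_nhds.add h0
  have hys : Tendsto (fun n : ℕ => y + 1/((n:ℝ)+1)) atTop (𝓝 y) := by
    simpa using tendsto_const_nhds.add h0
  have ht : Tendsto (fun n : ℕ => ((x + 1/((n:ℝ)+1)), (y + 1/((n:ℝ)+1)))) atTop
      (𝓝[(Ici 0 ×ˢ Ici 0 : Set (ℝ×ℝ))] (x, y)) :=
    tendsto_nhdsWithin_of_tendsto_nhds_of_eventually_within _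
      (hxs.prodMk_nhds hys) (Eventually.of_forall hmem)
  have hten := ((hf (x, y) ⟨hx, hy⟩).tendsto).comp ht
  exact ge_of_tendsto hten (Eventually.of_forall fun n => h _ _ (hx' n) (hy' n))

lemma pach_gronwall {z P : ℝ → ℝ} {T z0 : ℝ} (hT : 0 ≤ T)
    (hzc : ContinuousOn z (Icc 0 T)) (hPc : Continuous P)
    (hz' : ∀ t ∈ Ioo 0 T, ∃ z', HasDerivAt z z' t ∧ z' ≤ P t * z t)
    (hz0 : z 0 ≤ z0) :
    z T ≤ z0 * Real.exp (∫ s in (0:ℝ)..T, P s) := by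
  set I : ℝ → ℝ := fun t => ∫ s in (0:ℝ)..t, P s with hIdef
  have hI : ∀ t, HasDerivAt I (P t) t := fun t => (hPc.integral_hasStrictDerivAt 0 t).hasDerivAt
  have hIc : Continuous I :=
    continuous_iff_continuousAt.2 fun t => (hI t).differentiableAt.continuousAt
  set G : ℝ → ℝ := fun t => z t * Real.exp (-(I t)) with hGdef
  have hGa : AntitoneOn G (Icc 0 T) := by
    apply antitoneOn_of_deriv_nonpos (convex_Icc 0 T)
    · exact hzc.mul ((Real.continuous_exp.comp hIc.neg).continuousOn)
    · rw [interior_Icc]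
      intro t ht
      obtain ⟨z', hz'd, _⟩ := hz' t ht
      exact (hz'd.mul ((hI t).neg.exp)).differentiableAt.differentiableWithinAt
    · rw [interior_Icc]
      intro t ht
      obtain ⟨z', hz'd, hle⟩ := hz' t ht
      have hG' : HasDerivAt G (z' * Real.exp (-(I t)) + z t * (Real.exp (-(I t)) * -(P t))) t :=
        hz'd.mul ((hI t).neg.exp)
      rw [hG'.deriv]
      have hepos : 0 < Real.exp (-(I t)) := Real.exp_pos _
      nlinarith
  have h0T : G T ≤ G 0 := hGa ⟨le_rfl, hT⟩ ⟨hT, le_rfl⟩ hT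
  have hI0 : I 0 = 0 := intervalIntegral.integral_same
  have hzT : z T = G T * Real.exp (I T) := by
    rw [hGdef]
    simp [mul_assoc, ← Real.exp_add]
  rw [hzT]
  calc G T * Real.exp (I T) ≤ G 0 * Real.exp (I T) :=
        mul_le_mul_of_nonneg_right h0T (Real.exp_pos _).le
    _ = z 0 * Real.exp (I T) := by simp [hGdef, hI0]
    _ ≤ z0 * Real.exp (I T) := mul_le_mul_of_nonneg_right hz0 (Real.exp_pos _).le

lemma pach_primitive_mono {f : ℝ → ℝ} (hf : Continuous f) {y y' : ℝ} (hyy : y ≤ y')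
    (h0 : ∀ s, s ∈ Icc y y' → 0 ≤ f s) :
    (∫ s in (0:ℝ)..y, f s) ≤ ∫ s in (0:ℝ)..y', f s := by
  have hadd := intervalIntegral.integral_add_adjacent_intervals (μ := volume)
    (hf.intervalIntegrable 0 y) (hf.intervalIntegrable y y')
  have h2 : 0 ≤ ∫ s in y..y', f s := intervalIntegral.integral_nonneg hyy fun s hs => h0 s hs
  linarith

theorem pachpatte_integrodifferential_real
    (u c : ℝ → ℝ → ℝ) (a b : ℝ → ℝ)
    (huC2 : ContDiffOn ℝ 2 (fun z : ℝ × ℝ => u z.1 z.2) (Ici 0 ×ˢ Ici 0))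
    (u₁₂ : ℝ → ℝ → ℝ)
    (hu₁₂ : ∀ t₁ t₂ : ℝ, u₁₂ t₁ t₂ = deriv (fun y => deriv (fun x => u x y) t₁) t₂)
    (hu₁₂0 : ∀ t₁ t₂ : ℝ, 0 ≤ t₁ → 0 ≤ t₂ → 0 ≤ u₁₂ t₁ t₂)
    (hubd : ∀ t₁ t₂ : ℝ, 0 ≤ t₁ → 0 ≤ t₂ → u 0 t₂ = 0 ∧ u t₁ 0 = 0)
    (hcc : ContinuousOn (fun z : ℝ × ℝ => c z.1 z.2) (Ici 0 ×ˢ Ici 0))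
    (hc0 : ∀ t₁ t₂ : ℝ, 0 ≤ t₁ → 0 ≤ t₂ → 0 ≤ c t₁ t₂)
    (haC1 : ContDiffOn ℝ 1 a (Ici 0)) (hbC1 : ContDiffOn ℝ 1 b (Ici 0))
    (hapos : ∀ t₁ : ℝ, 0 ≤ t₁ → 0 < a t₁) (hbpos : ∀ t₂ : ℝ, 0 ≤ t₂ → 0 < b t₂)
    (ha' : ∀ t₁ : ℝ, 0 ≤ t₁ → 0 ≤ deriv a t₁)
    (hb' : ∀ t₂ : ℝ, 0 ≤ t₂ → 0 ≤ deriv b t₂)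
    (hineq : ∀ t₁ t₂ : ℝ, 0 ≤ t₁ → 0 ≤ t₂ →
      u₁₂ t₁ t₂ ≤ a t₁ + b t₂ +
        ∫ s₁ in (0:ℝ)..t₁, ∫ s₂ in (0:ℝ)..t₂, c s₁ s₂ * (u s₁ s₂ + u₁₂ s₁ s₂))
    (p q h : ℝ → ℝ → ℝ)
    (hp : ∀ t₁ t₂ : ℝ, p t₁ t₂ = deriv a t₁ / (a t₁ + b 0) +
      ∫ s₂ in (0:ℝ)..t₂, (1 + c t₁ s₂))
    (hq : ∀ t₁ t₂ : ℝ, q t₁ t₂ =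
      (a 0 + b t₂) * Real.exp (∫ s₁ in (0:ℝ)..t₁, p s₁ t₂) * c t₁ t₂)
    (hh : ∀ t₁ t₂ : ℝ, h t₁ t₂ = a t₁ + b t₂ +
      ∫ s₁ in (0:ℝ)..t₁, ∫ s₂ in (0:ℝ)..t₂, q s₁ s₂) :
    ∀ t₁ t₂ : ℝ, 0 ≤ t₁ → 0 ≤ t₂ →
      u t₁ t₂ ≤ ∫ s₁ in (0:ℝ)..t₁, ∫ s₂ in (0:ℝ)..t₂, h s₁ s₂ := by
  set Q : Set (ℝ × ℝ) := Ici 0 ×ˢ Ici 0 with hQdef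
  have hQu : UniqueDiffOn ℝ Q := (uniqueDiffOn_Ici 0).prod (uniqueDiffOn_Ici 0)
  set uu : ℝ × ℝ → ℝ := fun z => u z.1 z.2 with huudef
  set F := fderivWithin ℝ uu Q with hFdef
  set Gm := fderivWithin ℝ F Q with hGdef
  have hFcd : ContDiffOn ℝ 1 F Q := huC2.fderivWithin hQu (by norm_num)
  have hFc : ContinuousOn F Q := hFcd.continuousOn
  have hFd : DifferentiableOn ℝ F Q := hFcd.differentiableOn one_ne_zero
  have hGc : ContinuousOn Gm Q := hFcd.continuousOn_fderivWithin hQu le_rfl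
  have hud : DifferentiableOn ℝ uu Q := huC2.differentiableOn two_ne_zero
  have hmem : ∀ x y : ℝ, 0 ≤ x → 0 ≤ y → ((x, y) : ℝ × ℝ) ∈ Q := fun x y hx hy => ⟨hx, hy⟩
  have hnh : ∀ x y : ℝ, 0 < x → 0 < y → Q ∈ 𝓝 ((x, y) : ℝ × ℝ) := by
    intro x y hx hy
    rw [hQdef]
    exact prod_mem_nhds (Ici_mem_nhds hx) (Ici_mem_nhds hy)
  have huuAt : ∀ x y : ℝ, 0 < x → 0 < y → HasFDerivAt uu (F (x, y)) (x, y) := by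
    intro x y hx hy
    have hda := (hud (x, y) (hmem x y hx.le hy.le)).differentiableAt (hnh x y hx hy)
    have he : F (x, y) = fderiv ℝ uu (x, y) := by
      rw [hFdef]; exact fderivWithin_of_mem_nhds (hnh x y hx hy)
    rw [he]; exact hda.hasFDerivAt
  have hFAt : ∀ x y : ℝ, 0 < x → 0 < y → HasFDerivAt F (Gm (x, y)) (x, y) := by
    intro x y hx hy
    have hda := (hFd (x, y) (hmem x y hx.le hy.le)).differentiableAt (hnh x y hx hy)
    have he : Gm (x, y) = fderiv ℝ F (x, y) := by
      rw [hGdef]; exact fderivWithin_of_mem_nhds (hnh x y hx hy)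
    rw [he]; exact hda.hasFDerivAt
  have hd1 : ∀ x y : ℝ, 0 < x → 0 < y →
      HasDerivAt (fun s => u s y) (F (x, y) (1, 0)) x := by
    intro x y hx hy
    have hline : HasDerivAt (fun s : ℝ => ((s, y) : ℝ × ℝ)) (1, 0) x :=
      (hasDerivAt_id x).prodMk (hasDerivAt_const x y)
    simpa [Function.comp_def] using (huuAt x y hx hy).comp_hasDerivAt x hline
  have hd2 : ∀ x y : ℝ, 0 < x → 0 < y →
      HasDerivAt (fun t => F (x, t) (1, 0)) (Gm (x, y) (0, 1) (1, 0)) y := by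
    intro x y hx hy
    have hline : HasDerivAt (fun t : ℝ => ((x, t) : ℝ × ℝ)) (0, 1) y :=
      (hasDerivAt_const y x).prodMk (hasDerivAt_id y)
    have h1 : HasDerivAt (fun t => F (x, t)) (Gm (x, y) (0, 1)) y := by
      simpa [Function.comp_def] using (hFAt x y hx hy).comp_hasDerivAt y hline
    simpa [Function.comp_def] using
      ((ContinuousLinearMap.apply ℝ ℝ (((1:ℝ), (0:ℝ)) : ℝ × ℝ)).hasFDerivAt).comp_hasDerivAt y h1
  have hu12eq : ∀ x y : ℝ, 0 < x → 0 < y → u₁₂ x y = Gm (x, y) (0, 1) (1, 0) := by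
    intro x y hx hy
    rw [hu₁₂]
    have hev : (fun t => deriv (fun s => u s t) x) =ᶠ[𝓝 y] fun t => F (x, t) (1, 0) := by
      filter_upwards [Ioi_mem_nhds hy] with t ht
      exact (hd1 x t hx ht).deriv
    rw [hev.deriv_eq]
    exact (hd2 x y hx hy).deriv
  have hf10 : ∀ x : ℝ, 0 < x → F (x, 0) (1, 0) = 0 := by
    intro x hx
    have hz : ((x, 0) : ℝ × ℝ) ∈ Q := hmem x 0 hx.le le_rfl
    have h0 : HasFDerivWithinAt uu (F (x, 0)) Q (x, 0) := (hud _ hz).hasFDerivWithinAt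
    have hγ : HasDerivWithinAt (fun s : ℝ => ((s, 0) : ℝ × ℝ)) (1, 0) (Ici 0) x :=
      ((hasDerivAt_id x).prodMk (hasDerivAt_const x (0:ℝ))).hasDerivWithinAt
    have hmaps : MapsTo (fun s : ℝ => ((s, 0) : ℝ × ℝ)) (Ici 0) Q := fun s hs => hmem s 0 hs le_rfl
    have hcomp : HasDerivWithinAt (fun s => u s 0) (F (x, 0) (1, 0)) (Ici 0) x := by
      simpa [Function.comp_def] using h0.comp_hasDerivWithinAt x hγ hmaps
    have hA : HasDerivAt (fun s => u s 0) (F (x, 0) (1, 0)) x :=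
      hcomp.hasDerivAt (Ici_mem_nhds hx)
    have hevz : (fun s : ℝ => u s 0) =ᶠ[𝓝 x] fun _ => (0 : ℝ) := by
      filter_upwards [Ioi_mem_nhds hx] with s hs
      exact (hubd s 0 hs.le le_rfl).2
    have hB : HasDerivAt (fun s : ℝ => u s 0) 0 x :=
      hevz.hasDerivAt_iff.2 (hasDerivAt_const x (0:ℝ))
    exact hA.unique hB
  -- projection to the quadrant
  set pr : ℝ → ℝ := fun r => max r 0 with hprdef
  have hprc : Continuous pr := continuous_id.max continuous_const
  have hpr : ∀ r : ℝ, 0 ≤ r → pr r = r := fun r hr => max_eq_left hr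
  have hpr0 : ∀ r : ℝ, 0 ≤ pr r := fun r => le_max_right r 0
  have hPrc : Continuous fun z : ℝ × ℝ => ((pr z.1, pr z.2) : ℝ × ℝ) :=
    (hprc.comp continuous_fst).prodMk (hprc.comp continuous_snd)
  have hPrmem : ∀ z : ℝ × ℝ, ((pr z.1, pr z.2) : ℝ × ℝ) ∈ Q :=
    fun z => hmem _ _ (hpr0 _) (hpr0 _)
  set Ut : ℝ → ℝ → ℝ := fun x y => Gm (pr x, pr y) (0, 1) (1, 0) with hUtdef
  have hUQc : ContinuousOn (fun z : ℝ × ℝ => Gm z (0, 1) (1, 0)) Q :=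
    (hGc.clm_apply continuousOn_const).clm_apply continuousOn_const
  have hUtc : Continuous fun z : ℝ × ℝ => Ut z.1 z.2 := hUQc.comp_continuous hPrc hPrmem
  have hUteq : ∀ x y : ℝ, 0 ≤ x → 0 ≤ y → Ut x y = Gm (x, y) (0, 1) (1, 0) := by
    intro x y hx hy
    simp only [hUtdef, hpr x hx, hpr y hy]
  have hu12Ut : ∀ x y : ℝ, 0 < x → 0 < y → u₁₂ x y = Ut x y := by
    intro x y hx hy
    rw [hu12eq x y hx hy, hUteq x y hx.le hy.le]
  have hUt0 : ∀ x y : ℝ, 0 ≤ Ut x y := by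
    intro x y
    have hpos : ∀ x y : ℝ, 0 < x → 0 < y → 0 ≤ (fun z : ℝ × ℝ => Gm z (0, 1) (1, 0)) (x, y) := by
      intro x y hx hy
      have := hu₁₂0 x y hx.le hy.le
      rwa [hu12eq x y hx hy] at this
    have := pach_nonneg_ext (f := fun z : ℝ × ℝ => Gm z (0, 1) (1, 0)) hUQc hpos
      (pr x) (pr y) (hpr0 x) (hpr0 y)
    simpa [hUtdef] using this
  -- FTC in the second variable
  have hf1repr : ∀ x t₂ : ℝ, 0 < x → 0 ≤ t₂ →
      F (x, t₂) (1, 0) = ∫ s in (0:ℝ)..t₂, Ut x s := by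
    intro x t₂ hx ht₂
    have hmapsy : MapsTo (fun y : ℝ => ((x, y) : ℝ × ℝ)) (Icc 0 t₂) Q :=
      fun y hy => hmem x y hx.le hy.1
    have hcont : ContinuousOn (fun y => F (x, y) (1, 0)) (Icc 0 t₂) :=
      (hFc.comp (Continuous.continuousOn (by fun_prop)) hmapsy).clm_apply continuousOn_const
    have hderiv : ∀ y ∈ Ioo 0 t₂,
        HasDerivWithinAt (fun y => F (x, y) (1, 0)) (Ut x y) (Ioi y) y := by
      intro y hy
      rw [hUteq x y hx.le hy.1.le]
      exact (hd2 x y hx hy.1).hasDerivWithinAt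
    have hint : IntervalIntegrable (fun s => Ut x s) volume 0 t₂ :=
      (hUtc.comp ((continuous_const.prodMk continuous_id) :
        Continuous fun s : ℝ => ((x, s) : ℝ × ℝ))).intervalIntegrable 0 t₂
    have heq := intervalIntegral.integral_eq_sub_of_hasDeriv_right_of_le ht₂ hcont hderiv hint
    rw [heq, hf10 x hx, sub_zero]
  -- representation of u as double integral
  have hurepr : ∀ t₁ t₂ : ℝ, 0 ≤ t₁ → 0 ≤ t₂ →
      u t₁ t₂ = ∫ s₁ in (0:ℝ)..t₁, ∫ s₂ in (0:ℝ)..t₂, Ut s₁ s₂ := by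
    intro t₁ t₂ ht₁ ht₂
    rcases eq_or_lt_of_le ht₂ with hc2 | hc2
    · rw [← hc2, (hubd t₁ 0 ht₁ le_rfl).2]
      simp
    · have hmaps : MapsTo (fun s : ℝ => ((s, t₂) : ℝ × ℝ)) (Icc 0 t₁) Q :=
        fun s hs => hmem s t₂ hs.1 ht₂
      have hcont : ContinuousOn (fun s => u s t₂) (Icc 0 t₁) :=
        huC2.continuousOn.comp (Continuous.continuousOn (by fun_prop)) hmaps
      have hderiv : ∀ s ∈ Ioo 0 t₁,
          HasDerivWithinAt (fun s => u s t₂) (F (s, t₂) (1, 0)) (Ioi s) s :=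
        fun s hs => (hd1 s t₂ hs.1 hc2).hasDerivWithinAt
      have hint : IntervalIntegrable (fun s => F (s, t₂) (1, 0)) volume 0 t₁ := by
        apply ContinuousOn.intervalIntegrable
        rw [uIcc_of_le ht₁]
        exact (hFc.comp (Continuous.continuousOn (by fun_prop))
          (fun s hs => hmem s t₂ hs.1 ht₂)).clm_apply continuousOn_const
      have heq := intervalIntegral.integral_eq_sub_of_hasDeriv_right_of_le ht₁ hcont hderiv hint
      rw [(hubd 0 t₂ le_rfl ht₂).1, sub_zero] at heq
      rw [← heq]
      exact pach_integral_congr_pos ht₁ fun s hs _ => hf1repr s t₂ hs ht₂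
  have hu0 : ∀ t₁ t₂ : ℝ, 0 ≤ t₁ → 0 ≤ t₂ → 0 ≤ u t₁ t₂ := by
    intro t₁ t₂ h1 h2
    rw [hurepr t₁ t₂ h1 h2]
    exact intervalIntegral.integral_nonneg h1 fun s _ =>
      intervalIntegral.integral_nonneg h2 fun w _ => hUt0 s w
  -- continuous global surrogates
  set ut : ℝ → ℝ → ℝ := fun x y => u (pr x) (pr y) with hutdef
  have hutc : Continuous fun z : ℝ × ℝ => ut z.1 z.2 :=
    huC2.continuousOn.comp_continuous hPrc hPrmem
  have hut0 : ∀ x y : ℝ, 0 ≤ ut x y := fun x y => hu0 _ _ (hpr0 x) (hpr0 y)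
  have huteq : ∀ x y : ℝ, 0 ≤ x → 0 ≤ y → ut x y = u x y := by
    intro x y hx hy; simp only [hutdef, hpr x hx, hpr y hy]
  set ct : ℝ → ℝ → ℝ := fun x y => c (pr x) (pr y) with hctdef
  have hctc : Continuous fun z : ℝ × ℝ => ct z.1 z.2 := hcc.comp_continuous hPrc hPrmem
  have hct0 : ∀ x y : ℝ, 0 ≤ ct x y := fun x y => hc0 _ _ (hpr0 x) (hpr0 y)
  have hcteq : ∀ x y : ℝ, 0 ≤ x → 0 ≤ y → ct x y = c x y := by
    intro x y hx hy; simp only [hctdef, hpr x hx, hpr y hy]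
  set φ : ℝ → ℝ → ℝ := fun x y => ct x y * (ut x y + Ut x y) with hφdef
  have hφc : Continuous fun z : ℝ × ℝ => φ z.1 z.2 := hctc.mul (hutc.add hUtc)
  have hφ0 : ∀ x y : ℝ, 0 ≤ φ x y :=
    fun x y => mul_nonneg (hct0 x y) (add_nonneg (hut0 x y) (hUt0 x y))
  -- facts about a and b
  set A' : ℝ → ℝ := fun x => derivWithin a (Ici 0) (pr x) with hA'def
  have hA'c : Continuous A' :=
    (haC1.continuousOn_derivWithin (uniqueDiffOn_Ici 0) le_rfl).comp_continuous hprc hpr0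
  have hA'eq : ∀ x : ℝ, 0 < x → A' x = deriv a x := by
    intro x hx
    simp only [hA'def, hpr x hx.le]
    exact derivWithin_of_mem_nhds (Ici_mem_nhds hx)
  have haAt : ∀ x : ℝ, 0 < x → HasDerivAt a (A' x) x := by
    intro x hx
    have hda := (haC1.differentiableOn one_ne_zero x hx.le).differentiableAt (Ici_mem_nhds hx)
    rw [hA'eq x hx]
    exact hda.hasDerivAt
  have hA'0 : ∀ x : ℝ, 0 < x → 0 ≤ A' x := by
    intro x hx; rw [hA'eq x hx]; exact ha' x hx.le
  have hbmono : MonotoneOn b (Ici 0) := by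
    apply monotoneOn_of_deriv_nonneg (convex_Ici 0) hbC1.continuousOn
    · rw [interior_Ici]
      exact fun x hx => ((hbC1.differentiableOn one_ne_zero x (mem_Ici.2 (le_of_lt hx))).differentiableAt
        (Ici_mem_nhds hx)).differentiableWithinAt
    · rw [interior_Ici]
      exact fun x hx => hb' x (le_of_lt hx)
  have habpos : ∀ x : ℝ, 0 < a (pr x) + b 0 :=
    fun x => add_pos (hapos _ (hpr0 x)) (hbpos 0 le_rfl)
  -- the function v
  set V : ℝ → ℝ → ℝ := fun x y => ∫ s₁ in (0:ℝ)..x, ∫ s₂ in (0:ℝ)..y, φ s₁ s₂ with hVdef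
  have hVc : Continuous fun z : ℝ × ℝ => V z.1 z.2 := pach_cont_double hφc
  have hinnerφc : ∀ y : ℝ, Continuous fun s₁ => ∫ s₂ in (0:ℝ)..y, φ s₁ s₂ := fun y =>
    intervalIntegral.continuous_parametric_intervalIntegral_of_continuous' (f := φ) hφc 0 y
  set v : ℝ → ℝ → ℝ := fun x y => a (pr x) + b (pr y) + V x y with hvdef
  have hvc : Continuous fun z : ℝ × ℝ => v z.1 z.2 := by
    apply Continuous.add
    · exact ((haC1.continuousOn.comp_continuous (hprc.comp continuous_fst)
        (fun z => hpr0 _)).add (hbC1.continuousOn.comp_continuous (hprc.comp continuous_snd)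
        (fun z => hpr0 _)))
    · exact hVc
  have hinnervc : ∀ y : ℝ, Continuous fun s₁ => ∫ s₂ in (0:ℝ)..y, v s₁ s₂ := fun y =>
    intervalIntegral.continuous_parametric_intervalIntegral_of_continuous' (f := v) hvc 0 y
  have hV0 : ∀ x y : ℝ, 0 ≤ x → 0 ≤ y → 0 ≤ V x y := by
    intro x y hx hy
    exact intervalIntegral.integral_nonneg hx fun s _ =>
      intervalIntegral.integral_nonneg hy fun w _ => hφ0 s w
  have hv_lb : ∀ x y : ℝ, 0 ≤ x → 0 ≤ y → a x + b 0 ≤ v x y := by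
    intro x y hx hy
    have h1 : b 0 ≤ b (pr y) := hbmono self_mem_Ici (hpr0 y) (hpr0 y)
    have h2 := hV0 x y hx hy
    simp only [hvdef, hpr x hx]
    linarith
  have hv0 : ∀ x y : ℝ, 0 ≤ x → 0 ≤ y → 0 ≤ v x y := by
    intro x y hx hy
    have := hv_lb x y hx hy
    have := hapos x hx
    have := hbpos 0 le_rfl
    linarith
  -- the inequality hypothesis in terms of v
  have hu12v : ∀ x y : ℝ, 0 ≤ x → 0 ≤ y → u₁₂ x y ≤ v x y := by
    intro x y hx hy
    have hin := hineq x y hx hy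
    have heqV : (∫ s₁ in (0:ℝ)..x, ∫ s₂ in (0:ℝ)..y, c s₁ s₂ * (u s₁ s₂ + u₁₂ s₁ s₂)) = V x y := by
      rw [hVdef]
      apply pach_double_congr hx hy
      intro s₁ s₂ h1 h2
      rw [hu12Ut s₁ s₂ h1 h2, hφdef]
      simp only [hcteq s₁ s₂ h1.le h2.le, huteq s₁ s₂ h1.le h2.le]
    rw [heqV] at hin
    have : v x y = a x + b y + V x y := by simp only [hvdef, hpr x hx, hpr y hy]
    linarith
  have hUtv : ∀ x y : ℝ, 0 < x → 0 < y → Ut x y ≤ v x y := by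
    intro x y hx hy
    rw [← hu12Ut x y hx hy]
    exact hu12v x y hx.le hy.le
  -- the function Z = v + ∫∫v and its properties
  set W : ℝ → ℝ → ℝ := fun x y => ∫ s₁ in (0:ℝ)..x, ∫ s₂ in (0:ℝ)..y, v s₁ s₂ with hWdef
  have hWc : Continuous fun z : ℝ × ℝ => W z.1 z.2 := pach_cont_double hvc
  set Z : ℝ → ℝ → ℝ := fun x y => v x y + W x y with hZdef
  have hZc : Continuous fun z : ℝ × ℝ => Z z.1 z.2 := hvc.add hWc
  have hW0 : ∀ x y : ℝ, 0 ≤ x → 0 ≤ y → 0 ≤ W x y := by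
    intro x y hx hy
    exact intervalIntegral.integral_nonneg hx fun s hs =>
      intervalIntegral.integral_nonneg hy fun w hw => hv0 s w hs.1 hw.1
  have hZ_lb : ∀ x y : ℝ, 0 ≤ x → 0 ≤ y → a x + b 0 ≤ Z x y := by
    intro x y hx hy
    have := hv_lb x y hx hy
    have := hW0 x y hx hy
    simp only [hZdef]
    linarith
  have hvZ : ∀ x y : ℝ, 0 ≤ x → 0 ≤ y → v x y ≤ Z x y := by
    intro x y hx hy
    have := hW0 x y hx hy
    simp only [hZdef]
    linarith
  have hZmono₂ : ∀ x y y' : ℝ, 0 ≤ x → 0 ≤ y → y ≤ y' → Z x y ≤ Z x y' := by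
    intro x y y' hx hy hyy
    have hb2 : b (pr y) ≤ b (pr y') := hbmono (hpr0 y) (hpr0 y') (max_le_max hyy le_rfl)
    have hVm : V x y ≤ V x y' := by
      apply intervalIntegral.integral_mono_on hx ((hinnerφc y).intervalIntegrable 0 x)
        ((hinnerφc y').intervalIntegrable 0 x)
      intro s₁ _
      exact pach_primitive_mono (hφc.comp (continuous_const.prodMk continuous_id)) hyy
        fun w _ => hφ0 s₁ w
    have hWm : W x y ≤ W x y' := by
      apply intervalIntegral.integral_mono_on hx ((hinnervc y).intervalIntegrable 0 x)
        ((hinnervc y').intervalIntegrable 0 x)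
      intro s₁ hs₁
      exact pach_primitive_mono (hvc.comp (continuous_const.prodMk continuous_id)) hyy
        fun w hw => hv0 s₁ w hs₁.1 (hy.trans hw.1)
    simp only [hZdef, hvdef]
    linarith
  -- u + u₁₂ ≤ Z in the interior
  have hsum : ∀ x y : ℝ, 0 < x → 0 < y → ut x y + Ut x y ≤ Z x y := by
    intro x y hx hy
    have h1 : u x y ≤ W x y := by
      rw [hurepr x y hx.le hy.le, hWdef]
      exact pach_double_mono hx.le hy.le hUtc hvc fun s₁ s₂ h1 h2 => hUtv s₁ s₂ h1 h2
    have h2 : Ut x y ≤ v x y := hUtv x y hx hy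
    rw [huteq x y hx.le hy.le]
    simp only [hZdef]
    linarith
  -- Gronwall bound for Z
  have hZbound : ∀ x y : ℝ, 0 ≤ x → 0 < y →
      Z x y ≤ (a 0 + b y) * Real.exp (∫ s in (0:ℝ)..x,
        (A' s / (a (pr s) + b 0) + ∫ s₂ in (0:ℝ)..y, (1 + ct s s₂))) := by
    intro T₁ t₂ hT₁ ht₂
    set P : ℝ → ℝ := fun s => A' s / (a (pr s) + b 0) + ∫ s₂ in (0:ℝ)..t₂, (1 + ct s s₂)
      with hPdef
    have hPc : Continuous P := by
      apply Continuous.add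
      · exact hA'c.div (((haC1.continuousOn.comp_continuous hprc hpr0).add
          continuous_const)) fun s => (habpos s).ne'
      · exact intervalIntegral.continuous_parametric_intervalIntegral_of_continuous'
          (f := fun x y => 1 + ct x y)
          (continuous_const.add hctc : Continuous fun z : ℝ × ℝ => 1 + ct z.1 z.2) 0 t₂
    apply pach_gronwall (z := fun s => Z s t₂) (P := P) hT₁ ((hZc.comp
      ((continuous_id.prodMk continuous_const) : Continuous fun s : ℝ => ((s, t₂) : ℝ × ℝ))
      ).continuousOn) hPc
    · -- derivative and differential inequality
      intro t htI
      have ht1 : 0 < t := htI.1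
      refine ⟨A' t + (∫ s₂ in (0:ℝ)..t₂, φ t s₂) + ∫ s₂ in (0:ℝ)..t₂, v t s₂, ?_, ?_⟩
      · have hZs : (fun s => Z s t₂) = fun s => a (pr s) + b (pr t₂) +
            (∫ s₁ in (0:ℝ)..s, ∫ s₂ in (0:ℝ)..t₂, φ s₁ s₂) +
            ∫ s₁ in (0:ℝ)..s, ∫ s₂ in (0:ℝ)..t₂, v s₁ s₂ := by
          funext s
          simp only [hZdef, hvdef, hVdef, hWdef]
        rw [hZs]
        have hev : (fun s => a (pr s)) =ᶠ[𝓝 t] a := by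
          filter_upwards [Ioi_mem_nhds ht1] with s hs
          rw [hpr s hs.le]
        have hpa : HasDerivAt (fun s => a (pr s)) (A' t) t :=
          hev.hasDerivAt_iff.2 (haAt t ht1)
        have hVd : HasDerivAt (fun s => ∫ s₁ in (0:ℝ)..s, ∫ s₂ in (0:ℝ)..t₂, φ s₁ s₂)
            (∫ s₂ in (0:ℝ)..t₂, φ t s₂) t :=
          ((hinnerφc t₂).integral_hasStrictDerivAt 0 t).hasDerivAt
        have hWd : HasDerivAt (fun s => ∫ s₁ in (0:ℝ)..s, ∫ s₂ in (0:ℝ)..t₂, v s₁ s₂)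
            (∫ s₂ in (0:ℝ)..t₂, v t s₂) t :=
          ((hinnervc t₂).integral_hasStrictDerivAt 0 t).hasDerivAt
        exact ((hpa.add_const _).add hVd).add hWd
      · -- the bound z' ≤ P t * Z t t₂
        have hDlb : a (pr t) + b 0 ≤ Z t t₂ := by
          rw [hpr t ht1.le]; exact hZ_lb t t₂ ht1.le ht₂.le
        have hD0 : 0 ≤ Z t t₂ := le_trans (habpos t).le hDlb
        have h1 : A' t ≤ A' t / (a (pr t) + b 0) * Z t t₂ := by
          have hstep : A' t / (a (pr t) + b 0) * (a (pr t) + b 0) ≤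
              A' t / (a (pr t) + b 0) * Z t t₂ :=
            mul_le_mul_of_nonneg_left hDlb (div_nonneg (hA'0 t ht1) (habpos t).le)
          rwa [div_mul_cancel₀ _ (habpos t).ne'] at hstep
        have h2 : (∫ s₂ in (0:ℝ)..t₂, φ t s₂) ≤
            (∫ s₂ in (0:ℝ)..t₂, ct t s₂) * Z t t₂ := by
          have hstep : (∫ s₂ in (0:ℝ)..t₂, φ t s₂) ≤
              ∫ s₂ in (0:ℝ)..t₂, ct t s₂ * Z t t₂ := by
            refine pach_integral_mono_pos ht₂.le ?_ ?_ ?_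
            · exact ((hφc.comp (continuous_const.prodMk continuous_id)).intervalIntegrable 0 t₂)
            · exact (((hctc.comp (continuous_const.prodMk continuous_id)).mul
                continuous_const).intervalIntegrable 0 t₂)
            intro s₂ hs₂ hs₂'
            have ha1 : φ t s₂ ≤ ct t s₂ * Z t s₂ := by
              rw [hφdef]
              exact mul_le_mul_of_nonneg_left (hsum t s₂ ht1 hs₂) (hct0 t s₂)
            have ha2 : ct t s₂ * Z t s₂ ≤ ct t s₂ * Z t t₂ :=
              mul_le_mul_of_nonneg_left (hZmono₂ t s₂ t₂ ht1.le hs₂.le hs₂') (hct0 t s₂)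
            linarith
          rwa [intervalIntegral.integral_mul_const] at hstep
        have h3 : (∫ s₂ in (0:ℝ)..t₂, v t s₂) ≤ t₂ * Z t t₂ := by
          have hstep : (∫ s₂ in (0:ℝ)..t₂, v t s₂) ≤
              ∫ _ in (0:ℝ)..t₂, Z t t₂ := by
            refine pach_integral_mono_pos ht₂.le ?_ ?_ ?_
            · exact ((hvc.comp (continuous_const.prodMk continuous_id)).intervalIntegrable 0 t₂)
            · exact intervalIntegrable_const
            intro s₂ hs₂ hs₂'
            exact (hvZ t s₂ ht1.le hs₂.le).trans (hZmono₂ t s₂ t₂ ht1.le hs₂.le hs₂')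
          rwa [intervalIntegral.integral_const, sub_zero, smul_eq_mul] at hstep
        have hsplit : (∫ s₂ in (0:ℝ)..t₂, (1 + ct t s₂)) =
            t₂ + ∫ s₂ in (0:ℝ)..t₂, ct t s₂ := by
          rw [intervalIntegral.integral_add (f := fun _ : ℝ => (1:ℝ))
            (g := fun s₂ => ct t s₂) intervalIntegrable_const
            ((hctc.comp (continuous_const.prodMk continuous_id)).intervalIntegrable 0 t₂)]
          simp
        have hPt : P t * Z t t₂ = A' t / (a (pr t) + b 0) * Z t t₂ +
            t₂ * Z t t₂ + (∫ s₂ in (0:ℝ)..t₂, ct t s₂) * Z t t₂ := by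
          rw [hPdef]
          simp only
          rw [hsplit]
          ring
        rw [hPt]
        have hfin := add_le_add (add_le_add h1 h2) h3
        refine le_trans hfin (le_of_eq ?_)
        ring
    · -- initial value
      have hV00 : V 0 t₂ = 0 := intervalIntegral.integral_same
      have hW00 : W 0 t₂ = 0 := intervalIntegral.integral_same
      have : Z 0 t₂ = a 0 + b t₂ := by
        simp only [hZdef, hvdef, hV00, hW00, hpr 0 le_rfl, hpr t₂ ht₂.le]
        ring
      exact this.le
  -- relating the exponent to p
  have hPp : ∀ x y : ℝ, 0 ≤ x → 0 ≤ y →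
      (∫ s in (0:ℝ)..x,
      (A' s / (a (pr s) + b 0) + ∫ s₂ in (0:ℝ)..y, (1 + ct s s₂))) = ∫ s in (0:ℝ)..x, p s y := by
    intro x y hx hy
    apply pach_integral_congr_pos hx
    intro s hs _
    rw [hp s y, hA'eq s hs, hpr s hs.le]
    congr 1
    apply intervalIntegral.integral_congr
    intro w hw
    rw [uIcc_of_le hy] at hw
    simp only [hcteq s w hs.le hw.1]
  have hqeq : ∀ x y : ℝ, 0 ≤ x → 0 ≤ y → q x y =
      (a 0 + b (pr y)) * Real.exp (∫ s in (0:ℝ)..x,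
      (A' s / (a (pr s) + b 0) + ∫ s₂ in (0:ℝ)..y, (1 + ct s s₂))) * ct x y := by
    intro x y hx hy
    rw [hq x y, hPp x y hx hy, hpr y hy, hcteq x y hx hy]
  set qt : ℝ → ℝ → ℝ := fun x y => (a 0 + b (pr y)) * Real.exp (∫ s in (0:ℝ)..x,
      (A' s / (a (pr s) + b 0) + ∫ s₂ in (0:ℝ)..y, (1 + ct s s₂))) * ct x y
    with hqtdef
  have hPtc : Continuous fun w : ℝ × ℝ =>
      A' w.1 / (a (pr w.1) + b 0) + ∫ s₂ in (0:ℝ)..w.2, (1 + ct w.1 s₂) := by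
    apply Continuous.add
    · exact (hA'c.comp continuous_fst).div
        (((haC1.continuousOn.comp_continuous (hprc.comp continuous_fst) fun z => hpr0 _)).add
          continuous_const) fun w => (habpos w.1).ne'
    · exact pach_cont_param (f := fun x y => 1 + ct x y) (continuous_const.add hctc)
  have hEc : Continuous fun z : ℝ × ℝ => ∫ s in (0:ℝ)..z.1,
      (A' s / (a (pr s) + b 0) + ∫ s₂ in (0:ℝ)..z.2, (1 + ct s s₂)) := by
    have harg : Continuous (Function.uncurry fun (y s : ℝ) =>
        A' s / (a (pr s) + b 0) + ∫ s₂ in (0:ℝ)..y, (1 + ct s s₂)) := by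
      simpa [Function.uncurry_def, Function.comp_def] using hPtc.comp (continuous_snd.prodMk continuous_fst)
    have h2 := intervalIntegral.continuous_parametric_primitive_of_continuous (μ := volume)
      (a₀ := (0:ℝ)) harg
    have h3 := h2.comp ((continuous_snd.prodMk continuous_fst) :
      Continuous fun z : ℝ × ℝ => (z.2, z.1))
    simpa [Function.comp_def] using h3
  have hqtc : Continuous fun z : ℝ × ℝ => qt z.1 z.2 := by
    apply Continuous.mul
    · apply Continuous.mul
      · exact continuous_const.add (hbC1.continuousOn.comp_continuous
          (hprc.comp continuous_snd) fun z => hpr0 _)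
      · exact Real.continuous_exp.comp hEc
    · exact hctc
  have hφq : ∀ x y : ℝ, 0 < x → 0 < y → φ x y ≤ qt x y := by
    intro x y hx hy
    have hZb := hZbound x y hx.le hy
    have hc1 : φ x y ≤ ct x y * Z x y := by
      rw [hφdef]
      exact mul_le_mul_of_nonneg_left (hsum x y hx hy) (hct0 x y)
    have hc2 : ct x y * Z x y ≤
        ct x y * ((a 0 + b y) * Real.exp (∫ s in (0:ℝ)..x,
      (A' s / (a (pr s) + b 0) + ∫ s₂ in (0:ℝ)..y, (1 + ct s s₂)))) :=
      mul_le_mul_of_nonneg_left hZb (hct0 x y)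
    have hc3 : qt x y = ct x y * ((a 0 + b y) * Real.exp (∫ s in (0:ℝ)..x,
      (A' s / (a (pr s) + b 0) + ∫ s₂ in (0:ℝ)..y, (1 + ct s s₂)))) := by
      rw [hqtdef]
      simp only [hpr y hy.le]
      ring
    exact hc1.trans (hc2.trans (le_of_eq hc3.symm))
  have hvh : ∀ x y : ℝ, 0 ≤ x → 0 ≤ y → v x y ≤ h x y := by
    intro x y hx hy
    rw [hh x y]
    have hm1 : V x y ≤ ∫ s₁ in (0:ℝ)..x, ∫ s₂ in (0:ℝ)..y, qt s₁ s₂ := by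
      rw [hVdef]
      exact pach_double_mono hx hy hφc hqtc hφq
    have hm2 : (∫ s₁ in (0:ℝ)..x, ∫ s₂ in (0:ℝ)..y, qt s₁ s₂)
        = ∫ s₁ in (0:ℝ)..x, ∫ s₂ in (0:ℝ)..y, q s₁ s₂ :=
      pach_double_congr hx hy fun s₁ s₂ ha hb => (hqeq s₁ s₂ ha.le hb.le).symm
    have hm3 : v x y = a x + b y + V x y := by simp only [hvdef, hpr x hx, hpr y hy]
    linarith
  -- final assembly
  intro t₁ t₂ ht₁ ht₂
  rw [hurepr t₁ t₂ ht₁ ht₂]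
  set hti : ℝ → ℝ → ℝ := fun x y => a (pr x) + b (pr y) +
    ∫ s₁ in (0:ℝ)..x, ∫ s₂ in (0:ℝ)..y, qt s₁ s₂ with htidef
  have htic : Continuous fun z : ℝ × ℝ => hti z.1 z.2 := by
    apply Continuous.add
    · exact (haC1.continuousOn.comp_continuous (hprc.comp continuous_fst) fun z => hpr0 _).add
        (hbC1.continuousOn.comp_continuous (hprc.comp continuous_snd) fun z => hpr0 _)
    · exact pach_cont_double hqtc
  have hheq : ∀ x y : ℝ, 0 ≤ x → 0 ≤ y → hti x y = h x y := by
    intro x y hx hy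
    rw [hh x y]
    have hm2 : (∫ s₁ in (0:ℝ)..x, ∫ s₂ in (0:ℝ)..y, qt s₁ s₂)
        = ∫ s₁ in (0:ℝ)..x, ∫ s₂ in (0:ℝ)..y, q s₁ s₂ :=
      pach_double_congr hx hy fun s₁ s₂ ha hb => (hqeq s₁ s₂ ha.le hb.le).symm
    simp only [htidef, hpr x hx, hpr y hy, hm2]
  have hUth : ∀ x y : ℝ, 0 < x → 0 < y → Ut x y ≤ hti x y := by
    intro x y hx hy
    refine (hUtv x y hx hy).trans ?_
    rw [hheq x y hx.le hy.le]
    exact hvh x y hx.le hy.le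
  refine (pach_double_mono ht₁ ht₂ hUtc htic hUth).trans (le_of_eq ?_)
  exact pach_double_congr ht₁ ht₂ fun x y hx hy => hheq x y hx.le hy.le
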